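/- Let (Ω, 𝔉, μ) be a probability space, let I be a finite nonempty index set with |I| = C, for each i ∈ I let f_i : Ω → ℝ be measurable, let B > 0 be a real number, let T ≥ 1 be a natural number, and let δ ∈ (0, 1). Then with μ^{⊗T}-probability at least 1 − δ/2 over T independent draws (ω₁, …, ω_T) from μ, the following holds simultaneously for every i ∈ I and every real γ ∈ [0, ⌈B⌉]: if f_i(ω_t) ≤ γ for all t ∈ {1, …, T}, then μ{ω : f_i(ω) > γ + 1/T} ≤ (log(2C/δ) + log⌈B⌉ + log(T + 1)) / T. -/

import Mathlib

open MeasureTheory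

/-- Probabilistic core of Theorem 1: with probability at least `1 - δ/2` over `T`
independent draws, simultaneously for every `i` in a finite family of size `C` and every
`γ ∈ [0, ⌈B⌉]`, if all observed values of `f i` are at most `γ`, then
`μ{f i > γ + 1/T} ≤ (log(2C/δ) + log⌈B⌉ + log(T+1))/T`. -/
theorem stmt_4 {Ω : Type*} [MeasurableSpace Ω] (μ : Measure Ω)
    [IsProbabilityMeasure μ] {I : Type*} [Fintype I] [Nonempty I]
    (C : ℕ) (hC : Fintype.card I = C)
    (f : I → Ω → ℝ) (hf : ∀ i, Measurable (f i))
    (B : ℝ) (hB : 0 < B) (T : ℕ) (hT : 1 ≤ T) (δ : ℝ) (hδ0 : 0 < δ) (hδ1 : δ < 1) :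
    ENNReal.ofReal (1 - δ / 2) ≤
      Measure.pi (fun _ : Fin T => μ)
        {x | ∀ i : I, ∀ γ : ℝ, 0 ≤ γ → γ ≤ (⌈B⌉ : ℝ) →
          (∀ t, f i (x t) ≤ γ) →
          (μ {ω | γ + 1 / T < f i ω}).toReal ≤
            (Real.log (2 * C / δ) + Real.log (⌈B⌉ : ℝ) + Real.log (T + 1)) / T} := by
  classical
  obtain ⟨ν, hν⟩ : ∃ ν : Measure (Fin T → Ω), ν = Measure.pi (fun _ : Fin T => μ) :=
    ⟨_, rfl⟩
  haveI : IsProbabilityMeasure ν := by rw [hν]; infer_instance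
  obtain ⟨b, hb_def⟩ : ∃ b : ℕ, b = ⌈B⌉₊ := ⟨_, rfl⟩
  have hBceil : ((⌈B⌉ : ℤ) : ℝ) = (b : ℝ) := by
    rw [hb_def]; exact (natCast_ceil_eq_intCast_ceil hB.le).symm
  have hb1 : 1 ≤ b := by rw [hb_def]; exact Nat.one_le_ceil_iff.mpr hB
  have hC1 : 1 ≤ C := hC ▸ Fintype.card_pos
  have hTpos : (0 : ℝ) < T := by exact_mod_cast hT
  have hC1' : (1 : ℝ) ≤ C := by exact_mod_cast hC1
  have hb1' : (1 : ℝ) ≤ b := by exact_mod_cast hb1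
  have hCpos : (0 : ℝ) < C := by linarith
  have hbpos : (0 : ℝ) < b := by linarith
  obtain ⟨L, hL_def⟩ : ∃ L : ℝ,
      L = Real.log (2 * C / δ) + Real.log (b : ℝ) + Real.log (T + 1) := ⟨_, rfl⟩
  obtain ⟨ε, hε_def⟩ : ∃ ε : ℝ, ε = L / T := ⟨_, rfl⟩
  have hfrac_pos : (0 : ℝ) < 2 * C / δ := by positivity
  have hL0 : 0 ≤ L := by
    have h1 : 0 ≤ Real.log (2 * C / δ) := by
      apply Real.log_nonneg
      rw [le_div_iff₀ hδ0]; nlinarith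
    have h2 : 0 ≤ Real.log (b : ℝ) := Real.log_nonneg hb1'
    have h3 : 0 ≤ Real.log ((T : ℝ) + 1) := Real.log_nonneg (by linarith)
    linarith [hL_def]
  have hε0 : 0 ≤ ε := hε_def ▸ div_nonneg hL0 hTpos.le
  have hεT : ε * T = L := by rw [hε_def]; exact div_mul_cancel₀ L (ne_of_gt hTpos)
  have hexpL : Real.exp L = (2 * C / δ) * b * (T + 1) := by
    rw [hL_def, Real.exp_add, Real.exp_add, Real.exp_log hfrac_pos,
      Real.exp_log hbpos, Real.exp_log (by linarith)]
  have hexpneg : Real.exp (-L) = δ / (2 * C * b * (T + 1)) := by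
    rw [Real.exp_neg, hexpL]
    field_simp
  -- the grid sets
  obtain ⟨S, hS_def⟩ : ∃ S : I → ℕ → Set (Fin T → Ω),
      S = fun i (k : ℕ) => Set.pi Set.univ (fun _ : Fin T => {ω | f i ω ≤ (k : ℝ) / T}) :=
    ⟨_, rfl⟩
  obtain ⟨A, hA_def⟩ : ∃ A : I → ℕ → Set (Fin T → Ω),
      A = fun i (k : ℕ) =>
        if ε < (μ {ω | (k : ℝ) / T < f i ω}).toReal then S i k else ∅ := ⟨_, rfl⟩
  obtain ⟨Bad, hBad_def⟩ : ∃ Bad : Set (Fin T → Ω),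
      Bad = ⋃ i, ⋃ k ∈ Finset.range (b * T + 1), A i k := ⟨_, rfl⟩
  have hSmeas : ∀ i k, MeasurableSet (S i k) := by
    intro i k
    rw [hS_def]
    exact MeasurableSet.univ_pi (fun _ => measurableSet_le (hf i) measurable_const)
  have hAmeas : ∀ i k, MeasurableSet (A i k) := by
    intro i k
    simp only [hA_def]
    split
    · exact hSmeas i k
    · exact MeasurableSet.empty
  have hBadMeas : MeasurableSet Bad := by
    rw [hBad_def]
    exact MeasurableSet.iUnion fun i => MeasurableSet.biUnion (Set.to_countable _)
      (fun k _ => hAmeas i k)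
  -- bound on each bad event
  have hA_le : ∀ i k, ν (A i k) ≤ ENNReal.ofReal (Real.exp (-L)) := by
    intro i k
    simp only [hA_def]
    split
    case isTrue h =>
      set s : Set Ω := {ω | f i ω ≤ (k : ℝ) / T} with hs_def
      have hsc : {ω | (k : ℝ) / T < f i ω} = sᶜ := by
        ext ω; simp [hs_def, not_le]
      rw [hsc] at h
      have hsmeas : MeasurableSet s := measurableSet_le (hf i) measurable_const
      have hνS : ν (S i k) = μ s ^ T := by
        rw [hS_def, hν]
        simp only [Measure.pi_pi]
        rw [Finset.prod_const, Finset.card_univ, Fintype.card_fin]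
      have hε1 : ε ≤ 1 := by
        have h1 : (μ sᶜ).toReal ≤ 1 := by
          have h2 : μ sᶜ ≤ 1 := prob_le_one
          have := ENNReal.toReal_mono (by simp) h2
          simpa using this
        linarith
      have hofR : ENNReal.ofReal ε < μ sᶜ :=
        (ENNReal.ofReal_lt_iff_lt_toReal hε0 (measure_ne_top _ _)).mpr h
      have hadd : μ s + μ sᶜ = 1 := by
        rw [measure_add_measure_compl hsmeas]; simp
      have hμs : μ s ≤ ENNReal.ofReal (1 - ε) := by
        have h1 : μ s + ENNReal.ofReal ε ≤ 1 := by
          calc μ s + ENNReal.ofReal ε ≤ μ s + μ sᶜ := add_le_add le_rfl hofR.le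
            _ = 1 := hadd
        have h2 : μ s ≤ 1 - ENNReal.ofReal ε :=
          ENNReal.le_sub_of_add_le_right ENNReal.ofReal_ne_top h1
        calc μ s ≤ 1 - ENNReal.ofReal ε := h2
          _ = ENNReal.ofReal (1 - ε) := by
            rw [ENNReal.ofReal_sub 1 hε0, ENNReal.ofReal_one]
      calc ν (S i k) = μ s ^ T := hνS
        _ ≤ ENNReal.ofReal (1 - ε) ^ T := pow_le_pow_left' hμs T
        _ = ENNReal.ofReal ((1 - ε) ^ T) := by
            rw [ENNReal.ofReal_pow (by linarith)]
        _ ≤ ENNReal.ofReal (Real.exp (-L)) := by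
            apply ENNReal.ofReal_le_ofReal
            have h1 : 1 - ε ≤ Real.exp (-ε) := by
              have := Real.add_one_le_exp (-ε)
              linarith
            calc (1 - ε) ^ T ≤ Real.exp (-ε) ^ T :=
                  pow_le_pow_left₀ (by linarith) h1 T
              _ = Real.exp (-ε * T) := by
                  rw [← Real.exp_nat_mul]; ring_nf
              _ = Real.exp (-L) := by rw [neg_mul, hεT]
    case isFalse h => simp
  -- union bound
  have hBad_le : ν Bad ≤ ENNReal.ofReal (δ / 2) := by
    have h1 : ν Bad ≤ ∑ i : I, ∑ k ∈ Finset.range (b * T + 1), ν (A i k) := by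
      rw [hBad_def]
      calc ν (⋃ i, ⋃ k ∈ Finset.range (b * T + 1), A i k)
          ≤ ∑ i : I, ν (⋃ k ∈ Finset.range (b * T + 1), A i k) :=
            measure_iUnion_fintype_le _ _
        _ ≤ ∑ i : I, ∑ k ∈ Finset.range (b * T + 1), ν (A i k) :=
            Finset.sum_le_sum fun i _ => measure_biUnion_finset_le (μ := ν) (Finset.range (b * T + 1)) (A i)
    have h2 : ∑ i : I, ∑ k ∈ Finset.range (b * T + 1), ν (A i k)
        ≤ ((C * (b * T + 1) : ℕ) : ENNReal) * ENNReal.ofReal (Real.exp (-L)) := by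
      calc ∑ i : I, ∑ k ∈ Finset.range (b * T + 1), ν (A i k)
          ≤ ∑ _i : I, ∑ _k ∈ Finset.range (b * T + 1),
              ENNReal.ofReal (Real.exp (-L)) :=
            Finset.sum_le_sum fun i _ => Finset.sum_le_sum fun k _ => hA_le i k
        _ = ((C * (b * T + 1) : ℕ) : ENNReal) * ENNReal.ofReal (Real.exp (-L)) := by
            simp [Finset.sum_const, hC, mul_assoc]
    have h3 : ((C * (b * T + 1) : ℕ) : ENNReal) * ENNReal.ofReal (Real.exp (-L))
        ≤ ENNReal.ofReal (δ / 2) := by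
      rw [← ENNReal.ofReal_natCast, ← ENNReal.ofReal_mul (by positivity)]
      apply ENNReal.ofReal_le_ofReal
      rw [hexpneg]
      push_cast
      have hle : ((C : ℝ) * ((b : ℝ) * T + 1)) ≤ (C : ℝ) * ((b : ℝ) * (T + 1)) := by
        nlinarith
      have heq : (C : ℝ) * ((b : ℝ) * (T + 1)) * (δ / (2 * C * b * (T + 1))) = δ / 2 := by
        field_simp
      calc (C : ℝ) * ((b : ℝ) * T + 1) * (δ / (2 * C * b * (T + 1)))
          ≤ (C : ℝ) * ((b : ℝ) * (T + 1)) * (δ / (2 * C * b * (T + 1))) :=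
            mul_le_mul_of_nonneg_right hle (by positivity)
        _ = δ / 2 := heq
    exact h1.trans (h2.trans h3)
  -- the good event is contained in the target set
  have hsub : Badᶜ ⊆ {x : Fin T → Ω | ∀ i : I, ∀ γ : ℝ, 0 ≤ γ → γ ≤ (⌈B⌉ : ℝ) →
      (∀ t, f i (x t) ≤ γ) →
      (μ {ω | γ + 1 / T < f i ω}).toReal ≤
        (Real.log (2 * C / δ) + Real.log (⌈B⌉ : ℝ) + Real.log (T + 1)) / T} := by
    intro x hx i γ hγ0 hγB ht
    rw [hBceil] at hγB ⊢
    obtain ⟨k, hk_def⟩ : ∃ k : ℕ, k = ⌈γ * T⌉₊ := ⟨_, rfl⟩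
    have hγT0 : 0 ≤ γ * T := by positivity
    have hkmem : k ∈ Finset.range (b * T + 1) := by
      rw [Finset.mem_range, Nat.lt_succ_iff, hk_def]
      apply Nat.ceil_le.mpr
      push_cast
      exact mul_le_mul_of_nonneg_right hγB hTpos.le
    have hγk : γ ≤ (k : ℝ) / T := by
      rw [le_div_iff₀ hTpos, hk_def]
      exact Nat.le_ceil _
    have hk1 : (k : ℝ) / T ≤ γ + 1 / T := by
      rw [div_le_iff₀ hTpos]
      have h1 : (k : ℝ) < γ * T + 1 := by rw [hk_def]; exact Nat.ceil_lt_add_one hγT0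
      have h2 : (γ + 1 / T) * T = γ * T + 1 := by field_simp
      linarith
    have hxS : x ∈ S i k := by
      rw [hS_def]
      intro t _
      exact (ht t).trans hγk
    have hcond : ¬ ε < (μ {ω | (k : ℝ) / T < f i ω}).toReal := by
      intro hcond
      apply hx
      rw [hBad_def]
      refine Set.mem_iUnion.mpr ⟨i, Set.mem_iUnion₂.mpr ⟨k, hkmem, ?_⟩⟩
      simp only [hA_def]
      rw [if_pos hcond]
      exact hxS
    push_neg at hcond
    have hmono : μ {ω | γ + 1 / T < f i ω} ≤ μ {ω | (k : ℝ) / T < f i ω} :=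
      measure_mono fun ω hω => lt_of_le_of_lt hk1 hω
    calc (μ {ω | γ + 1 / T < f i ω}).toReal
        ≤ (μ {ω | (k : ℝ) / T < f i ω}).toReal :=
          ENNReal.toReal_mono (measure_ne_top _ _) hmono
      _ ≤ ε := hcond
      _ = (Real.log (2 * C / δ) + Real.log (b : ℝ) + Real.log (T + 1)) / T := by
          rw [hε_def, hL_def]
  -- conclude
  rw [← hν]
  calc ENNReal.ofReal (1 - δ / 2)
      = 1 - ENNReal.ofReal (δ / 2) := by
        rw [ENNReal.ofReal_sub 1 (by positivity), ENNReal.ofReal_one]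
    _ ≤ 1 - ν Bad := tsub_le_tsub_left hBad_le 1
    _ = ν Badᶜ := by
        rw [measure_compl hBadMeas (measure_ne_top _ _), measure_univ]
    _ ≤ _ := measure_mono hsub
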